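/- arXiv:2308.08790 — 2 statements merged into one kernel-verified Lean document; each statement's English description precedes it below -/
import Mathlib

section
/- Legitimate user performance bound: define J(μ) = (1−γ̄)(1−μ)·tr W + (γ̄ + (1−γ̄)μ)·tr S, where W and S solve X = q A X Aᵀ + P̄ and X = q A X Aᵀ + Q with q = γ̄ + (1−γ̄)μ, and let P^{OP} solve P^{OP} = A P^{OP} Aᵀ + Q. If P̄ < P^{OP} in the positive definite order, γ̄ < 1 and μ < 1, then J(μ) < tr P^{OP}. -/
open Matrix Filter Topology

section
attribute [local instance] Matrix.linftyOpNormedRing Matrix.linftyOpNormedAlgebra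

lemma entry_nnnorm_le {n : ℕ} (M : Matrix (Fin n) (Fin n) ℂ) (i j : Fin n) :
    ‖M i j‖₊ ≤ ‖M‖₊ := by
  rw [Matrix.linfty_opNNNorm_def]
  refine le_trans ?_ (Finset.le_sup (Finset.mem_univ i))
  exact Finset.single_le_sum (f := fun j => ‖M i j‖₊) (by intros; positivity) (Finset.mem_univ j)

set_option maxHeartbeats 800000 in
lemma pow_tendsto_zero {n : ℕ} (hn : 0 < n) (A : Matrix (Fin n) (Fin n) ℝ)
    (hρ : ∀ z ∈ spectrum ℂ (A.map (algebraMap ℝ ℂ)), ‖z‖ < 1) :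
    Tendsto (fun k => A ^ k) atTop (𝓝 0) := by
  haveI : Nonempty (Fin n) := ⟨⟨0, hn⟩⟩
  set B := A.map (algebraMap ℝ ℂ) with hB
  have h1 : spectralRadius ℂ B < 1 := by
    have := spectrum.spectralRadius_lt_of_forall_lt (a := B) (r := 1)
      (fun z hz => by have h := hρ z hz; rw [← coe_nnnorm] at h; exact_mod_cast h)
    simpa using this
  obtain ⟨t, ht1, ht2⟩ := exists_between h1
  have ht_top : t ≠ ⊤ := (ht2.trans_le le_top).ne
  have hgel := spectrum.pow_nnnorm_pow_one_div_tendsto_nhds_spectralRadius B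
  have hev : ∀ᶠ k : ℕ in atTop, ((‖B ^ k‖₊ : ENNReal)) ^ (1 / (k:ℝ)) < t :=
    hgel.eventually_lt_const ht1
  have hev2 : ∀ᶠ k : ℕ in atTop, ‖B ^ k‖ ≤ t.toReal ^ k := by
    filter_upwards [hev, eventually_ge_atTop 1] with k hk hk1
    have hk0 : (k : ℝ) ≠ 0 := by positivity
    have h2 : ((‖B ^ k‖₊ : ENNReal)) < t ^ (k:ℝ) := by
      have h := ENNReal.rpow_lt_rpow hk (show (0:ℝ) < (k:ℝ) by positivity)
      rwa [← ENNReal.rpow_mul, one_div, inv_mul_cancel₀ hk0, ENNReal.rpow_one] at h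
    have hfin : ((‖B ^ k‖₊ : ENNReal)) ≤ ENNReal.ofReal (t.toReal ^ k) := by
      refine h2.le.trans ?_
      rw [ENNReal.rpow_natCast, ← ENNReal.ofReal_toReal (ENNReal.pow_ne_top ht_top),
        ENNReal.toReal_pow]
    have := (ENNReal.toReal_le_toReal (by simp) (by simp)).mpr hfin
    simpa [ENNReal.toReal_ofReal (by positivity : (0:ℝ) ≤ t.toReal ^ k), coe_nnnorm] using this
  have ht1r : t.toReal < 1 := by
    rw [← ENNReal.toReal_one]
    exact ENNReal.toReal_strict_mono (by simp) ht2
  have ht0r : (0:ℝ) ≤ t.toReal := ENNReal.toReal_nonneg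
  refine tendsto_pi_nhds.mpr fun i => ?_
  refine tendsto_pi_nhds.mpr fun j => ?_
  have hBpow : ∀ k, B ^ k = (A ^ k).map (algebraMap ℝ ℂ) := by
    intro k
    simp only [hB, ← RingHom.mapMatrix_apply, map_pow]
  refine squeeze_zero_norm' ?_ (tendsto_pow_atTop_nhds_zero_of_lt_one ht0r ht1r)
  filter_upwards [hev2] with k hk
  have h3 : ‖(B ^ k) i j‖ ≤ ‖B ^ k‖ := entry_nnnorm_le (B ^ k) i j
  have h4 : ‖(A ^ k) i j‖ = ‖(B ^ k) i j‖ := by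
    rw [hBpow k]; simp [Matrix.map_apply]
  calc ‖(A ^ k) i j‖ = ‖(B ^ k) i j‖ := h4
    _ ≤ ‖B ^ k‖ := h3
    _ ≤ t.toReal ^ k := hk

end

lemma psd_smul {n : ℕ} {M : Matrix (Fin n) (Fin n) ℝ} (h : M.PosSemidef) {c : ℝ}
    (hc : 0 ≤ c) : (c • M).PosSemidef := by
  constructor
  · unfold Matrix.IsHermitian
    rw [Matrix.conjTranspose_smul, h.1]
    simp
  · intro x
    have := h.2 x
    exact (h.smul hc).2 x

lemma psd_trace_nonneg {n : ℕ} {M : Matrix (Fin n) (Fin n) ℝ} (h : M.PosSemidef) :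
    0 ≤ M.trace := by
  rw [Matrix.trace]
  refine Finset.sum_nonneg fun i _ => ?_
  exact h.diag_nonneg

lemma pd_trace_pos {n : ℕ} (hn : 0 < n) {M : Matrix (Fin n) (Fin n) ℝ} (h : M.PosDef) :
    0 < M.trace := by
  rw [Matrix.trace]
  have hne : (Finset.univ : Finset (Fin n)).Nonempty := ⟨⟨0, hn⟩, Finset.mem_univ _⟩
  refine Finset.sum_pos (fun i _ => ?_) hne
  exact h.diag_pos

/-- Legitimate user performance bound: with
`J(μ) = (1−γ̄)(1−μ) tr W + (γ̄ + (1−γ̄)μ) tr S`, where `W` and `S` solve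
`X = q A X Aᵀ + P̄` and `X = q A X Aᵀ + Q` with `q = γ̄ + (1−γ̄)μ`, and `P^{OP}`
solves `P^{OP} = A P^{OP} Aᵀ + Q`; if `P̄ < P^{OP}` (i.e. `P^{OP} − P̄` is
positive definite), `γ̄ < 1` and `μ < 1`, then `J(μ) < tr P^{OP}`. -/
theorem legitimate_cost_lt_open_loop
    (n : ℕ) (hn : 0 < n) (A Pbar Q POP : Matrix (Fin n) (Fin n) ℝ)
    (hρ : ∀ z ∈ spectrum ℂ (A.map (algebraMap ℝ ℂ)), ‖z‖ < 1)
    (hPbar : Pbar.PosSemidef) (hQ : Q.PosSemidef)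
    (hPdiff : (POP - Pbar).PosDef)
    (hPOP : POP = A * POP * Aᵀ + Q)
    (γ μ : ℝ) (hγ : γ ∈ Set.Ico (0 : ℝ) 1) (hμ : μ ∈ Set.Ico (0 : ℝ) 1)
    (q : ℝ) (hq : q = γ + (1 - γ) * μ)
    (W S : Matrix (Fin n) (Fin n) ℝ)
    (hW : W = q • (A * W * Aᵀ) + Pbar)
    (hS : S = q • (A * S * Aᵀ) + Q) :
    (1 - γ) * (1 - μ) * W.trace + (γ + (1 - γ) * μ) * S.trace < POP.trace := by
  have hpow : Tendsto (fun k => A ^ k) atTop (𝓝 0) := pow_tendsto_zero hn A hρ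
  obtain ⟨hγ0, hγ1⟩ := hγ
  obtain ⟨hμ0, hμ1⟩ := hμ
  have hq0 : 0 ≤ q := by nlinarith
  have hq1 : q < 1 := by nlinarith
  set D : Matrix (Fin n) (Fin n) ℝ := POP - ((1 - q) • W + q • S) with hDdef
  set R : Matrix (Fin n) (Fin n) ℝ := (1 - q) • (POP - Pbar) with hRdef
  have h1 : q • (A * W * Aᵀ) = W - Pbar := eq_sub_iff_add_eq.mpr hW.symm
  have h2 : q • (A * S * Aᵀ) = S - Q := eq_sub_iff_add_eq.mpr hS.symm
  have h3 : A * POP * Aᵀ = POP - Q := eq_sub_iff_add_eq.mpr hPOP.symm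
  have hD : D = q • (A * D * Aᵀ) + R := by
    have expand : A * D * Aᵀ =
        A * POP * Aᵀ - ((1 - q) • (A * W * Aᵀ) + q • (A * S * Aᵀ)) := by
      simp only [hDdef, Matrix.sub_mul, Matrix.mul_sub, Matrix.add_mul, Matrix.mul_add,
        Matrix.smul_mul, Matrix.mul_smul]
    rw [expand, h3, smul_sub, smul_add, smul_comm q (1 - q), h1, h2, hRdef, hDdef]
    module
  -- iteration identity
  have step : ∀ k : ℕ, A ^ k * D * (A ^ k)ᵀ =
      q • (A ^ (k+1) * D * (A ^ (k+1))ᵀ) + A ^ k * R * (A ^ k)ᵀ := by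
    intro k
    conv_lhs => rw [hD]
    rw [Matrix.transpose_pow, Matrix.transpose_pow, pow_succ A k, pow_succ' Aᵀ k]
    simp only [Matrix.mul_add, Matrix.add_mul, Matrix.mul_smul, Matrix.smul_mul,
      Matrix.mul_assoc]
  have claim : ∀ k : ℕ, D.trace = q ^ k * (A ^ k * D * (A ^ k)ᵀ).trace +
      ∑ j ∈ Finset.range k, q ^ j * (A ^ j * R * (A ^ j)ᵀ).trace := by
    intro k
    induction k with
    | zero => simp
    | succ k ih =>
      rw [ih, Finset.sum_range_succ, step k]
      rw [Matrix.trace_add, Matrix.trace_smul]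
      simp only [smul_eq_mul]
      ring
  -- positivity facts
  have hRpsd : R.PosSemidef := psd_smul hPdiff.posSemidef (by linarith)
  have htermnn : ∀ j : ℕ, 0 ≤ q ^ j * (A ^ j * R * (A ^ j)ᵀ).trace := by
    intro j
    have : (A ^ j * R * (A ^ j)ᵀ).PosSemidef := by
      have := hRpsd.mul_mul_conjTranspose_same (A ^ j)
      rwa [Matrix.conjTranspose_eq_transpose_of_trivial] at this
    have := psd_trace_nonneg this
    positivity
  have hRtrace : 0 < R.trace := by
    rw [hRdef, Matrix.trace_smul, smul_eq_mul]
    have := pd_trace_pos hn hPdiff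
    nlinarith
  -- error term tends to zero
  have hcont : Continuous (fun M : Matrix (Fin n) (Fin n) ℝ => (M * D * Mᵀ).trace) := by
    exact ((continuous_id.matrix_mul continuous_const).matrix_mul
      continuous_id.matrix_transpose).matrix_trace
  have herr : Tendsto (fun k : ℕ => q ^ k * (A ^ k * D * (A ^ k)ᵀ).trace) atTop (𝓝 0) := by
    have h5 : Tendsto (fun k : ℕ => (A ^ k * D * (A ^ k)ᵀ).trace) atTop (𝓝 0) := by
      have h7 := (hcont.tendsto 0).comp hpow
      simpa [Function.comp_def, Matrix.transpose_pow] using h7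
    have h6 : Tendsto (fun k : ℕ => q ^ k) atTop (𝓝 0) :=
      tendsto_pow_atTop_nhds_zero_of_lt_one hq0 hq1
    simpa using h6.mul h5
  -- conclude tr D ≥ tr R
  have hge : ∀ k : ℕ, 1 ≤ k → R.trace + q ^ k * (A ^ k * D * (A ^ k)ᵀ).trace ≤ D.trace := by
    intro k hk
    rw [claim k]
    have : R.trace ≤ ∑ j ∈ Finset.range k, q ^ j * (A ^ j * R * (A ^ j)ᵀ).trace := by
      have h0 : q ^ 0 * (A ^ 0 * R * (A ^ 0)ᵀ).trace = R.trace := by simp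
      calc R.trace = q ^ 0 * (A ^ 0 * R * (A ^ 0)ᵀ).trace := h0.symm
        _ ≤ ∑ j ∈ Finset.range k, q ^ j * (A ^ j * R * (A ^ j)ᵀ).trace := by
            refine Finset.single_le_sum (f := fun j => q ^ j * (A ^ j * R * (A ^ j)ᵀ).trace)
              (fun j _ => htermnn j) ?_
            simpa using (by omega : 0 < k)
    linarith
  have hDtrace : R.trace ≤ D.trace := by
    have hlim : Tendsto (fun k : ℕ => R.trace + q ^ k * (A ^ k * D * (A ^ k)ᵀ).trace)
        atTop (𝓝 (R.trace)) := by
      simpa using (tendsto_const_nhds (x := R.trace)).add herr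
    refine le_of_tendsto hlim ?_
    filter_upwards [eventually_ge_atTop 1] with k hk using hge k hk
  have hfinal : 0 < D.trace := lt_of_lt_of_le hRtrace hDtrace
  have hexp : D.trace = POP.trace - ((1 - q) * W.trace + q * S.trace) := by
    rw [hDdef]
    rw [Matrix.trace_sub, Matrix.trace_add, Matrix.trace_smul, Matrix.trace_smul]
    simp [smul_eq_mul]
  have hcoef : (1 - γ) * (1 - μ) = 1 - q := by rw [hq]; ring
  rw [hcoef, ← hq]
  linarith [hexp ▸ hfinal]
end

section
/- Degenerate-channel limits: with q = γ̄ + (1−γ̄)μ, as q → 1⁻ the quantity (1−q)·tr W(q) + q·tr S(q) tends to tr P^{OP}, where W(q), S(q) solve X = q A X Aᵀ + P̄ and X = q A X Aᵀ + Q and P^{OP} solves P^{OP} = A P^{OP} Aᵀ + Q. -/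
open Matrix

section AuxiliaryLemmas

open Filter
open scoped ENNReal NNReal

attribute [local instance] Matrix.linftyOpNormedRing Matrix.linftyOpNormedAlgebra
  Matrix.linftyOpNormedSpace

private lemma entry_norm_le_aux {n : ℕ} (B : Matrix (Fin n) (Fin n) ℂ) (i j : Fin n) :
    ‖B i j‖ ≤ ‖B‖ := by
  rw [Matrix.linfty_opNorm_def]
  have h1 : ‖B i j‖₊ ≤ ∑ k, ‖B i k‖₊ :=
    Finset.single_le_sum (f := fun k => ‖B i k‖₊) (fun k _ => zero_le) (Finset.mem_univ j)
  have h2 : (∑ k, ‖B i k‖₊) ≤ Finset.univ.sup fun i => ∑ k, ‖B i k‖₊ :=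
    Finset.le_sup (f := fun i => ∑ k, ‖B i k‖₊) (Finset.mem_univ i)
  exact_mod_cast h1.trans h2

/-- Entrywise geometric decay of powers of a matrix with spectral radius `< 1`. -/
private lemma geom_decay_aux {n : ℕ} (A : Matrix (Fin n) (Fin n) ℝ)
    (hρ : ∀ z ∈ spectrum ℂ (A.map (algebraMap ℝ ℂ)), ‖z‖ < 1) :
    ∃ C r : ℝ, 0 < C ∧ 0 ≤ r ∧ r < 1 ∧ ∀ j, ∀ i k, |(A ^ j) i k| ≤ C * r ^ j := by
  haveI : CompleteSpace (Matrix (Fin n) (Fin n) ℂ) := FiniteDimensional.complete ℂ _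
  set B := A.map (algebraMap ℝ ℂ) with hB
  have hsr : spectralRadius ℂ B < 1 := by
    rcases Set.eq_empty_or_nonempty (spectrum ℂ B) with h | h
    · rw [spectralRadius]
      simp [h]
    · obtain ⟨z, hz, hzeq⟩ := spectrum.exists_nnnorm_eq_spectralRadius_of_nonempty h
      rw [← hzeq]
      exact_mod_cast (by exact_mod_cast hρ z hz : ‖z‖₊ < 1)
  obtain ⟨r'0, hr1'0, hr2'0⟩ := exists_between hsr
  have hr1' : spectralRadius ℂ B < max r'0 (1/2) := lt_max_of_lt_left hr1'0
  have hr2' : max r'0 (1/2) < 1 := max_lt hr2'0 (by norm_num)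
  set r' := max r'0 (1/2) with hr'def
  have hr'pos : 0 < r' := lt_max_of_lt_right (by norm_num)
  lift r' to ℝ≥0 using (hr2'.trans_le le_top).ne with r
  have hrlt1 : r < 1 := by exact_mod_cast hr2'
  have hg := spectrum.pow_nnnorm_pow_one_div_tendsto_nhds_spectralRadius B
  have hev : ∀ᶠ m : ℕ in atTop, (‖B ^ m‖₊ : ℝ≥0∞) ^ (1 / m : ℝ) < (r : ℝ≥0∞) :=
    hg.eventually_lt_const hr1'
  obtain ⟨N, hN⟩ := hev.exists_forall_of_atTop
  have key : ∀ m, N ≤ m → 1 ≤ m → ‖B ^ m‖ ≤ (r : ℝ) ^ m := by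
    intro m hm hm1
    have h := hN m hm
    have hm0 : (m : ℝ) ≠ 0 := by positivity
    have := ENNReal.rpow_lt_rpow h (by positivity : (0:ℝ) < m)
    rw [← ENNReal.rpow_mul, one_div, inv_mul_cancel₀ hm0,
      ENNReal.rpow_one, ENNReal.rpow_natCast] at this
    have : ‖B ^ m‖₊ < r ^ m := by exact_mod_cast this
    exact le_of_lt (by exact_mod_cast this)
  have hrpos : 0 < (r:ℝ) := by exact_mod_cast hr'pos
  set M := max N 1 with hM
  set C : ℝ := (1 + ∑ j ∈ Finset.range M, ‖B ^ j‖) * ((r:ℝ) ^ M)⁻¹ with hC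
  have hsum_nonneg : (0:ℝ) ≤ ∑ j ∈ Finset.range M, ‖B ^ j‖ :=
    Finset.sum_nonneg fun j _ => norm_nonneg _
  have hCpos : 0 < C := by positivity
  have hC1 : 1 ≤ C := by
    rw [hC]
    have h1 : ((r:ℝ) ^ M)⁻¹ ≥ 1 := by
      rw [ge_iff_le, le_inv_comm₀]
      · simpa using pow_le_one₀ hrpos.le hrlt1.le
      · norm_num
      · positivity
    nlinarith
  have hBnorm : ∀ j, ‖B ^ j‖ ≤ C * (r:ℝ) ^ j := by
    intro j
    rcases lt_or_ge j M with hj | hj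
    · calc ‖B ^ j‖ ≤ ∑ i ∈ Finset.range M, ‖B ^ i‖ :=
            Finset.single_le_sum (fun i _ => norm_nonneg _) (Finset.mem_range.mpr hj)
        _ = ((1 + ∑ i ∈ Finset.range M, ‖B ^ i‖) * ((r:ℝ) ^ M)⁻¹) * (r:ℝ) ^ M - 1 := by
            field_simp
            ring
        _ ≤ C * (r:ℝ) ^ j - 0 := by
            have : (r:ℝ) ^ M ≤ (r:ℝ) ^ j :=
              pow_le_pow_of_le_one hrpos.le (by exact_mod_cast hrlt1.le) hj.le
            rw [← hC]
            nlinarith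
        _ = C * (r:ℝ) ^ j := by ring
    · have := key j (le_trans (le_max_left _ _) hj) (le_trans (le_max_right _ _) hj)
      calc ‖B ^ j‖ ≤ (r:ℝ) ^ j := this
        _ ≤ C * (r:ℝ) ^ j := by nlinarith [pow_pos hrpos j]
  refine ⟨C, r, hCpos, hrpos.le, by exact_mod_cast hrlt1, fun j i k => ?_⟩
  have hmap : B ^ j = (A ^ j).map (algebraMap ℝ ℂ) := by
    have := map_pow ((algebraMap ℝ ℂ).mapMatrix (m := Fin n)) A j
    simpa [RingHom.mapMatrix_apply, hB] using this.symm
  have hentry : |(A ^ j) i k| = ‖(B ^ j) i k‖ := by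
    rw [hmap]
    simp [Matrix.map_apply]
  rw [hentry]
  exact (entry_norm_le_aux _ i k).trans (hBnorm j)

end AuxiliaryLemmas

section ScalarLimit

open Filter

/-- Abel-type limit for geometrically dominated series. -/
private lemma scalar_limit_aux (c : ℕ → ℝ) (E r : ℝ) (hr0 : 0 ≤ r) (hr1 : r < 1)
    (hc : ∀ j, |c j| ≤ E * r ^ j) :
    Tendsto (fun q : ℝ => ∑' j, q ^ j * c j) (nhdsWithin 1 (Set.Iio 1))
      (nhds (∑' j, c j)) := by
  have hrn : ‖r‖ < 1 := by rwa [Real.norm_eq_abs, abs_of_nonneg hr0]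
  have hgeo : Summable (fun j : ℕ => E * r ^ j) :=
    (summable_geometric_of_lt_one hr0 hr1).mul_left E
  have hsc : Summable c := Summable.of_norm_bounded hgeo hc
  have hjgeo : Summable (fun j : ℕ => (j : ℝ) * r ^ j) := by
    simpa using summable_pow_mul_geometric_of_norm_lt_one 1 hrn
  set K := E * ∑' j : ℕ, (j : ℝ) * r ^ j with hK
  have hsq : ∀ q : ℝ, q ∈ Set.Icc (0:ℝ) 1 → Summable (fun j : ℕ => q ^ j * c j) := by
    intro q hq
    refine Summable.of_norm_bounded hgeo fun j => ?_
    rw [Real.norm_eq_abs, abs_mul, abs_pow, abs_of_nonneg hq.1]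
    calc q ^ j * |c j| ≤ 1 * |c j| := by
          have := pow_le_one₀ (n := j) hq.1 hq.2
          nlinarith [abs_nonneg (c j)]
      _ ≤ E * r ^ j := by rw [one_mul]; exact hc j
  have hbound : ∀ q : ℝ, q ∈ Set.Icc (0:ℝ) 1 →
      |(∑' j : ℕ, q ^ j * c j) - ∑' j : ℕ, c j| ≤ (1 - q) * K := by
    intro q hq
    have hsub : (∑' j : ℕ, q ^ j * c j) - ∑' j : ℕ, c j
        = ∑' j : ℕ, (q ^ j * c j - c j) := (Summable.tsum_sub (hsq q hq) hsc).symm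
    rw [hsub]
    have hterm : ∀ j : ℕ, |q ^ j * c j - c j| ≤ (1 - q) * (E * ((j:ℝ) * r ^ j)) := by
      intro j
      have h1 : |q ^ j * c j - c j| = (1 - q ^ j) * |c j| := by
        rw [show q ^ j * c j - c j = -((1 - q ^ j) * c j) by ring, abs_neg, abs_mul]
        congr 1
        rw [abs_of_nonneg]
        have := pow_le_one₀ (n := j) hq.1 hq.2
        linarith
      have h2 : 1 - q ^ j ≤ (j : ℝ) * (1 - q) := by
        have := geom_sum_mul q j
        have hsum : (∑ i ∈ Finset.range j, q ^ i) ≤ j := by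
          calc (∑ i ∈ Finset.range j, q ^ i) ≤ ∑ i ∈ Finset.range j, 1 :=
              Finset.sum_le_sum fun i _ => pow_le_one₀ hq.1 hq.2
            _ = j := by simp
        have hql : 1 - q ≥ 0 := by linarith [hq.2]
        have hqj : 1 - q ^ j = (∑ i ∈ Finset.range j, q ^ i) * (1 - q) := by linarith [this]
        rw [hqj]
        nlinarith
      rw [h1]
      have hcj := hc j
      have h3 : (1 - q ^ j) ≥ 0 := by
        have := pow_le_one₀ (n := j) hq.1 hq.2; linarith
      have h4 : (0:ℝ) ≤ 1 - q := by linarith [hq.2]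
      calc (1 - q ^ j) * |c j| ≤ ((j:ℝ) * (1 - q)) * (E * r ^ j) := by
            apply mul_le_mul h2 hcj (abs_nonneg _)
            positivity
        _ = (1 - q) * (E * ((j:ℝ) * r ^ j)) := by ring
    have hsl : Summable (fun j : ℕ => q ^ j * c j - c j) := (hsq q hq).sub hsc
    have hsr2 : Summable (fun j : ℕ => (1 - q) * (E * ((j:ℝ) * r ^ j))) :=
      (hjgeo.mul_left E).mul_left (1 - q)
    have hslabs : Summable (fun j : ℕ => |q ^ j * c j - c j|) := hsl.abs
    have hslnorm : Summable (fun j : ℕ => ‖q ^ j * c j - c j‖) := by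
      simpa only [Real.norm_eq_abs] using hslabs
    calc |∑' j : ℕ, (q ^ j * c j - c j)| ≤ ∑' j : ℕ, |q ^ j * c j - c j| := by
          have h := norm_tsum_le_tsum_norm hslnorm
          simpa only [Real.norm_eq_abs] using h
      _ ≤ ∑' j : ℕ, (1 - q) * (E * ((j:ℝ) * r ^ j)) :=
          Summable.tsum_le_tsum hterm hslabs hsr2
      _ = (1 - q) * K := by
          rw [hK, tsum_mul_left, tsum_mul_left]
  have hev : ∀ᶠ q in nhdsWithin (1:ℝ) (Set.Iio 1), q ∈ Set.Ioo (0:ℝ) 1 :=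
    Ioo_mem_nhdsLT_of_mem (by norm_num : (1:ℝ) ∈ Set.Ioc (0:ℝ) 1)
  have hK0 : Tendsto (fun q : ℝ => (1 - q) * K) (nhdsWithin 1 (Set.Iio 1)) (nhds 0) := by
    have h1 : Tendsto (fun q : ℝ => (1 - q) * K) (nhds 1) (nhds ((1 - 1) * K)) :=
      (Continuous.mul (Continuous.sub continuous_const continuous_id) continuous_const).tendsto 1
    simpa using h1.mono_left nhdsWithin_le_nhds
  have hzero : Tendsto (fun q : ℝ => (∑' j : ℕ, q ^ j * c j) - ∑' j : ℕ, c j)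
      (nhdsWithin 1 (Set.Iio 1)) (nhds 0) := by
    apply squeeze_zero_norm' _ hK0
    filter_upwards [hev] with q hq
    exact hbound q ⟨hq.1.le, hq.2.le⟩
  have := hzero.add_const (∑' j : ℕ, c j)
  simpa using this

end ScalarLimit

private lemma matrix_summable_aux {n : ℕ} (f : ℕ → Matrix (Fin n) (Fin n) ℝ)
    (hf : ∀ i k, Summable fun j => f j i k) : Summable f := by
  have : Summable (fun j => (f j : Fin n → Fin n → ℝ)) :=
    Pi.summable.mpr fun i => Pi.summable.mpr fun k => hf i k
  exact this

private lemma trace_tsum_eq_aux {n : ℕ} (f : ℕ → Matrix (Fin n) (Fin n) ℝ)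
    (hf : Summable f) : (∑' j, f j).trace = ∑' j, (f j).trace :=
  ((hf.hasSum.map (Matrix.traceAddMonoidHom (Fin n) ℝ)
    (Continuous.matrix_trace continuous_id)).tsum_eq).symm

private lemma sandwich_entry_bd_aux {n : ℕ} (A P : Matrix (Fin n) (Fin n) ℝ) (C r : ℝ)
    (hr0 : 0 ≤ r) (hr1 : r < 1)
    (hb : ∀ j, ∀ i k, |(A ^ j) i k| ≤ C * r ^ j) (j : ℕ) (i k : Fin n) :
    |(A ^ j * P * Aᵀ ^ j) i k| ≤ (C ^ 2 * ∑ a, ∑ b, |P a b|) * r ^ j := by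
  have hsum_nonneg : (0:ℝ) ≤ ∑ a, ∑ b, |P a b| :=
    Finset.sum_nonneg fun a _ => Finset.sum_nonneg fun b _ => abs_nonneg _
  calc |(A ^ j * P * Aᵀ ^ j) i k|
      = |∑ b, (∑ a, (A ^ j) i a * P a b) * (A ^ j) k b| := by
        rw [Matrix.mul_apply]
        congr 1
        refine Finset.sum_congr rfl fun b _ => ?_
        rw [Matrix.mul_apply, ← Matrix.transpose_pow, Matrix.transpose_apply]
    _ ≤ ∑ b, |(∑ a, (A ^ j) i a * P a b) * (A ^ j) k b| := Finset.abs_sum_le_sum_abs _ _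
    _ ≤ ∑ b, ∑ a, |(A ^ j) i a| * |P a b| * |(A ^ j) k b| := by
        refine Finset.sum_le_sum fun b _ => ?_
        rw [abs_mul]
        calc |∑ a, (A ^ j) i a * P a b| * |(A ^ j) k b|
            ≤ (∑ a, |(A ^ j) i a * P a b|) * |(A ^ j) k b| :=
              mul_le_mul_of_nonneg_right (Finset.abs_sum_le_sum_abs _ _) (abs_nonneg _)
          _ = ∑ a, |(A ^ j) i a| * |P a b| * |(A ^ j) k b| := by
              rw [Finset.sum_mul]
              exact Finset.sum_congr rfl fun a _ => by rw [abs_mul]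
    _ ≤ ∑ b, ∑ a, (C * r ^ j) * |P a b| * (C * r ^ j) := by
        refine Finset.sum_le_sum fun b _ => Finset.sum_le_sum fun a _ => ?_
        have h1 := hb j i a
        have h2 := hb j k b
        have h3 := abs_nonneg (P a b)
        have hcr : (0:ℝ) ≤ C * r ^ j := le_trans (abs_nonneg _) h1
        exact mul_le_mul (mul_le_mul_of_nonneg_right h1 h3) h2 (abs_nonneg _)
          (mul_nonneg hcr h3)
    _ = (C ^ 2 * ∑ a, ∑ b, |P a b|) * (r ^ j * r ^ j) := by
        rw [Finset.sum_comm]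
        simp only [Finset.mul_sum, Finset.sum_mul]
        refine Finset.sum_congr rfl fun a _ => Finset.sum_congr rfl fun b _ => by ring
    _ ≤ (C ^ 2 * ∑ a, ∑ b, |P a b|) * r ^ j := by
        have h1 : r ^ j ≤ 1 := pow_le_one₀ hr0 hr1.le
        have h2 : 0 ≤ r ^ j := pow_nonneg hr0 j
        have h3 : (0:ℝ) ≤ C ^ 2 * ∑ a, ∑ b, |P a b| := by positivity
        nlinarith [mul_nonneg (mul_nonneg h3 h2) (sub_nonneg.mpr h1)]

private lemma sandwich_trace_bd_aux {n : ℕ} (A P : Matrix (Fin n) (Fin n) ℝ) (C r : ℝ)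
    (hr0 : 0 ≤ r) (hr1 : r < 1)
    (hb : ∀ j, ∀ i k, |(A ^ j) i k| ≤ C * r ^ j) (j : ℕ) :
    |(A ^ j * P * Aᵀ ^ j).trace| ≤ (n * (C ^ 2 * ∑ a, ∑ b, |P a b|)) * r ^ j := by
  calc |(A ^ j * P * Aᵀ ^ j).trace| ≤ ∑ i, |(A ^ j * P * Aᵀ ^ j) i i| := by
        rw [Matrix.trace]
        exact Finset.abs_sum_le_sum_abs _ _
    _ ≤ ∑ _i : Fin n, (C ^ 2 * ∑ a, ∑ b, |P a b|) * r ^ j :=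
        Finset.sum_le_sum fun i _ => sandwich_entry_bd_aux A P C r hr0 hr1 hb j i i
    _ = (n * (C ^ 2 * ∑ a, ∑ b, |P a b|)) * r ^ j := by
        rw [Finset.sum_const]
        simp [mul_assoc]

private lemma pop_partial_aux {n : ℕ} (A Q POP : Matrix (Fin n) (Fin n) ℝ)
    (hPOP : POP = A * POP * Aᵀ + Q) (N : ℕ) :
    POP = (∑ j ∈ Finset.range N, A ^ j * Q * Aᵀ ^ j) + A ^ N * POP * Aᵀ ^ N := by
  induction N with
  | zero => simp
  | succ N ih =>
    have key : A ^ N * POP * Aᵀ ^ N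
        = A ^ (N+1) * POP * Aᵀ ^ (N+1) + A ^ N * Q * Aᵀ ^ N := by
      conv_lhs => rw [hPOP]
      rw [pow_succ (a := A), pow_succ' (a := Aᵀ)]
      noncomm_ring
    rw [Finset.sum_range_succ]
    calc POP = (∑ j ∈ Finset.range N, A ^ j * Q * Aᵀ ^ j) + A ^ N * POP * Aᵀ ^ N := ih
      _ = _ := by rw [key]; abel

/-- Degenerate-channel limit: as `q → 1⁻`, the quantity
`(1−q) tr W(q) + q tr S(q)` tends to `tr P^{OP}`, where
`W(q) = ∑_j q^j A^j P̄ Aᵀ^j`, `S(q) = ∑_j q^j A^j Q Aᵀ^j` and `P^{OP}` solves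
`P^{OP} = A P^{OP} Aᵀ + Q`. -/
theorem degenerate_channel_limit
    (n : ℕ) (A Pbar Q POP : Matrix (Fin n) (Fin n) ℝ)
    (hρ : ∀ z ∈ spectrum ℂ (A.map (algebraMap ℝ ℂ)), ‖z‖ < 1)
    (hPbar : Pbar.PosSemidef) (hQ : Q.PosSemidef)
    (hPOP : POP = A * POP * Aᵀ + Q) :
    Filter.Tendsto
      (fun q : ℝ =>
        (1 - q) * (∑' j : ℕ, q ^ j • (A ^ j * Pbar * Aᵀ ^ j)).trace
          + q * (∑' j : ℕ, q ^ j • (A ^ j * Q * Aᵀ ^ j)).trace)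
      (nhdsWithin 1 (Set.Iio 1)) (nhds POP.trace) := by
  obtain ⟨C, r, hC, hr0, hr1, hb⟩ := geom_decay_aux A hρ
  have hgeo_r : Summable (fun j : ℕ => r ^ j) := summable_geometric_of_lt_one hr0 hr1
  set w : ℕ → ℝ := fun j => (A ^ j * Pbar * Aᵀ ^ j).trace with hw
  set s : ℕ → ℝ := fun j => (A ^ j * Q * Aᵀ ^ j).trace with hs
  set Ew : ℝ := n * (C ^ 2 * ∑ a, ∑ b, |Pbar a b|) with hEw
  set Es : ℝ := n * (C ^ 2 * ∑ a, ∑ b, |Q a b|) with hEs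
  have hwbd : ∀ j, |w j| ≤ Ew * r ^ j := fun j =>
    sandwich_trace_bd_aux A Pbar C r hr0 hr1 hb j
  have hsbd : ∀ j, |s j| ≤ Es * r ^ j := fun j =>
    sandwich_trace_bd_aux A Q C r hr0 hr1 hb j
  have hws : Summable w := Summable.of_norm_bounded (hgeo_r.mul_left Ew) hwbd
  have hss : Summable s := Summable.of_norm_bounded (hgeo_r.mul_left Es) hsbd
  -- ∑' s = POP.trace
  have hstar : ∑' j, s j = POP.trace := by
    have hpartial : ∀ N : ℕ, ∑ j ∈ Finset.range N, s j
        = POP.trace - (A ^ N * POP * Aᵀ ^ N).trace := by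
      intro N
      have := congrArg Matrix.trace (pop_partial_aux A Q POP hPOP N)
      rw [Matrix.trace_add, Matrix.trace_sum] at this
      rw [hs]
      linarith
    have hrem : Filter.Tendsto (fun N : ℕ => (A ^ N * POP * Aᵀ ^ N).trace)
        Filter.atTop (nhds 0) := by
      apply squeeze_zero_norm'
        (a := fun N : ℕ => (n * (C ^ 2 * ∑ a, ∑ b, |POP a b|)) * r ^ N)
      · exact Filter.Eventually.of_forall fun N =>
          sandwich_trace_bd_aux A POP C r hr0 hr1 hb N
      · have := (tendsto_pow_atTop_nhds_zero_of_lt_one hr0 hr1).const_mul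
          (n * (C ^ 2 * ∑ a, ∑ b, |POP a b|))
        simpa using this
    have h1 : Filter.Tendsto (fun N : ℕ => ∑ j ∈ Finset.range N, s j)
        Filter.atTop (nhds (POP.trace)) := by
      simp only [hpartial]
      have := (tendsto_const_nhds (x := POP.trace)
        (f := Filter.atTop (α := ℕ))).sub hrem
      simpa using this
    exact tendsto_nhds_unique hss.hasSum.tendsto_sum_nat h1
  -- scalar limits
  have hWlim := scalar_limit_aux w Ew r hr0 hr1 hwbd
  have hSlim := scalar_limit_aux s Es r hr0 hr1 hsbd
  -- base tendsto facts
  have hq1 : Filter.Tendsto (fun q : ℝ => q) (nhdsWithin 1 (Set.Iio 1)) (nhds 1) :=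
    Filter.Tendsto.mono_left Filter.tendsto_id nhdsWithin_le_nhds
  have h1q : Filter.Tendsto (fun q : ℝ => 1 - q) (nhdsWithin 1 (Set.Iio 1)) (nhds 0) := by
    have := (tendsto_const_nhds (x := (1:ℝ))
      (f := nhdsWithin (1:ℝ) (Set.Iio 1))).sub hq1
    simpa using this
  have hmain : Filter.Tendsto
      (fun q : ℝ => (1 - q) * ∑' j : ℕ, q ^ j * w j + q * ∑' j : ℕ, q ^ j * s j)
      (nhdsWithin 1 (Set.Iio 1)) (nhds POP.trace) := by
    have := (h1q.mul hWlim).add (hq1.mul hSlim)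
    simpa [hstar] using this
  -- eventual equality with the original expression
  have hev : ∀ᶠ q in nhdsWithin (1:ℝ) (Set.Iio 1), q ∈ Set.Ioo (0:ℝ) 1 :=
    Ioo_mem_nhdsLT_of_mem (by norm_num : (1:ℝ) ∈ Set.Ioc (0:ℝ) 1)
  refine hmain.congr' ?_
  filter_upwards [hev] with q hq
  have hqabs : |q| ≤ 1 := by
    rw [abs_of_nonneg hq.1.le]; exact hq.2.le
  have hswap : ∀ P : Matrix (Fin n) (Fin n) ℝ,
      (∑' j : ℕ, q ^ j • (A ^ j * P * Aᵀ ^ j)).trace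
        = ∑' j : ℕ, q ^ j * (A ^ j * P * Aᵀ ^ j).trace := by
    intro P
    have hsm : Summable (fun j : ℕ => q ^ j • (A ^ j * P * Aᵀ ^ j)) := by
      apply matrix_summable_aux
      intro i k
      apply Summable.of_norm_bounded (hgeo_r.mul_left (C ^ 2 * ∑ a, ∑ b, |P a b|))
      intro j
      have hent := sandwich_entry_bd_aux A P C r hr0 hr1 hb j i k
      have : ‖(q ^ j • (A ^ j * P * Aᵀ ^ j)) i k‖
          = |q| ^ j * |(A ^ j * P * Aᵀ ^ j) i k| := by
        simp [Matrix.smul_apply, abs_mul, abs_pow, Real.norm_eq_abs]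
      rw [this]
      calc |q| ^ j * |(A ^ j * P * Aᵀ ^ j) i k|
          ≤ 1 * ((C ^ 2 * ∑ a, ∑ b, |P a b|) * r ^ j) := by
            apply mul_le_mul (pow_le_one₀ (abs_nonneg q) hqabs) hent (abs_nonneg _)
              zero_le_one
        _ = (C ^ 2 * ∑ a, ∑ b, |P a b|) * r ^ j := one_mul _
    rw [trace_tsum_eq_aux _ hsm]
    refine tsum_congr fun j => ?_
    rw [Matrix.trace_smul]
    simp
  rw [hswap Pbar, hswap Q]
end
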